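/- arXiv:0910.3126 — 3 statements merged into one kernel-verified Lean document; each statement's English description precedes it below -/
import Mathlib

section
/- Let c, g₁, g₂ be real numbers and let φ, y : ℝ → ℝ be differentiable functions with φ(ξ) ≠ c for all ξ, satisfying the system φ'(ξ) = (√2/2) y(ξ) and y'(ξ) = √2 ((φ(ξ) - c)(g₁ - y(ξ)²/2 - φ(ξ)²) - 2g₂ φ(ξ)) / (φ(ξ) - c)². Then the Hamiltonian H(φ, y) = φ⁴ - (4c/3)φ³ + (4g₂ - 2g₁)φ² + 4c g₁ φ + (φ - c)² y² is constant along the solution, i.e., ξ ↦ H(φ(ξ), y(ξ)) is a constant function. -/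
/-- Along any solution `(φ, y)` of the singular travelling-wave
system `φ' = (√2/2) y`, `y' = √2((φ - c)(g₁ - y²/2 - φ²) - 2g₂φ)/(φ - c)²`
that avoids the singular line `φ = c`, the Hamiltonian
`H(φ, y) = φ⁴ - (4c/3)φ³ + (4g₂ - 2g₁)φ² + 4cg₁φ + (φ - c)²y²` is constant. -/
theorem stmt_11 (c g₁ g₂ : ℝ) (φ y : ℝ → ℝ)
    (hφ : Differentiable ℝ φ) (hy : Differentiable ℝ y)
    (hsing : ∀ ξ : ℝ, φ ξ ≠ c)
    (heq1 : ∀ ξ : ℝ, deriv φ ξ = (Real.sqrt 2 / 2) * y ξ)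
    (heq2 : ∀ ξ : ℝ, deriv y ξ =
      Real.sqrt 2 * ((φ ξ - c) * (g₁ - (y ξ) ^ 2 / 2 - (φ ξ) ^ 2) - 2 * g₂ * φ ξ)
        / (φ ξ - c) ^ 2)
    (H : ℝ → ℝ → ℝ)
    (hH : ∀ p q : ℝ, H p q = p ^ 4 - (4 * c / 3) * p ^ 3
      + (4 * g₂ - 2 * g₁) * p ^ 2 + 4 * c * g₁ * p + (p - c) ^ 2 * q ^ 2) :
    ∀ ξ₁ ξ₂ : ℝ, H (φ ξ₁) (y ξ₁) = H (φ ξ₂) (y ξ₂) := by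
  intro ξ₁ ξ₂
  have key : ∀ ξ : ℝ, HasDerivAt (fun t => (φ t) ^ 4 - (4 * c / 3) * (φ t) ^ 3
      + (4 * g₂ - 2 * g₁) * (φ t) ^ 2 + 4 * c * g₁ * (φ t)
      + (φ t - c) ^ 2 * (y t) ^ 2) 0 ξ := by
    intro ξ
    have hne : φ ξ - c ≠ 0 := sub_ne_zero.mpr (hsing ξ)
    have hφ' : HasDerivAt φ ((Real.sqrt 2 / 2) * y ξ) ξ := by
      rw [← heq1]; exact (hφ ξ).hasDerivAt
    have hy' : HasDerivAt y
        (Real.sqrt 2 * ((φ ξ - c) * (g₁ - (y ξ) ^ 2 / 2 - (φ ξ) ^ 2) - 2 * g₂ * φ ξ)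
          / (φ ξ - c) ^ 2) ξ := by
      rw [← heq2]; exact (hy ξ).hasDerivAt
    have hD := ((((hφ'.pow 4).sub ((hφ'.pow 3).const_mul (4 * c / 3))).add
        ((hφ'.pow 2).const_mul (4 * g₂ - 2 * g₁))).add (hφ'.const_mul (4 * c * g₁))).add
        ((((hφ'.sub_const c).pow 2)).mul (hy'.pow 2))
    refine hD.congr_deriv ?_
    simp only [Pi.pow_apply]
    have h2 : Real.sqrt 2 * Real.sqrt 2 = 2 := Real.mul_self_sqrt (by norm_num)
    field_simp
    ring_nf
  have hconst := fun ξ => (key ξ).deriv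
  simp only [hH]
  exact is_const_of_deriv_eq_zero (fun t => (key t).differentiableAt) hconst ξ₁ ξ₂
end

section
/- Let c, g₁, g₂ be real numbers and let φ, y : ℝ → ℝ be differentiable functions satisfying the system φ'(ζ) = (1/2)(φ(ζ) - c)² y(ζ) and y'(ζ) = (φ(ζ) - c)(g₁ - y(ζ)²/2 - φ(ζ)²) - 2g₂ φ(ζ). Then the Hamiltonian H(φ, y) = φ⁴ - (4c/3)φ³ + (4g₂ - 2g₁)φ² + 4c g₁ φ + (φ - c)² y² is constant along the solution, i.e., ζ ↦ H(φ(ζ), y(ζ)) is a constant function. -/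
/-- Along any solution `(φ, y)` of the regularized travelling-wave
system `φ' = (1/2)(φ - c)²y`, `y' = (φ - c)(g₁ - y²/2 - φ²) - 2g₂φ`, the
Hamiltonian `H(φ, y) = φ⁴ - (4c/3)φ³ + (4g₂ - 2g₁)φ² + 4cg₁φ + (φ - c)²y²`
is constant. -/
theorem stmt_12 (c g₁ g₂ : ℝ) (φ y : ℝ → ℝ)
    (hφ : Differentiable ℝ φ) (hy : Differentiable ℝ y)
    (heq1 : ∀ ζ : ℝ, deriv φ ζ = (1 / 2) * (φ ζ - c) ^ 2 * y ζ)
    (heq2 : ∀ ζ : ℝ, deriv y ζ =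
      (φ ζ - c) * (g₁ - (y ζ) ^ 2 / 2 - (φ ζ) ^ 2) - 2 * g₂ * φ ζ)
    (H : ℝ → ℝ → ℝ)
    (hH : ∀ p q : ℝ, H p q = p ^ 4 - (4 * c / 3) * p ^ 3
      + (4 * g₂ - 2 * g₁) * p ^ 2 + 4 * c * g₁ * p + (p - c) ^ 2 * q ^ 2) :
    ∀ ζ₁ ζ₂ : ℝ, H (φ ζ₁) (y ζ₁) = H (φ ζ₂) (y ζ₂) := by
  have hfun : (fun z => H (φ z) (y z)) = (fun z => φ z ^ 4 - 4 * c / 3 * φ z ^ 3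
      + (4 * g₂ - 2 * g₁) * φ z ^ 2 + 4 * c * g₁ * φ z + (φ z - c) ^ 2 * y z ^ 2) := by
    funext z; rw [hH]
  have key : ∀ ζ : ℝ, HasDerivAt (fun z => H (φ z) (y z)) 0 ζ := by
    intro ζ
    have h1 : HasDerivAt φ (deriv φ ζ) ζ := (hφ ζ).hasDerivAt
    have h2 : HasDerivAt y (deriv y ζ) ζ := (hy ζ).hasDerivAt
    have h3 := ((((h1.pow 4).sub ((h1.pow 3).const_mul (4 * c / 3))).add
      ((h1.pow 2).const_mul (4 * g₂ - 2 * g₁))).add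
      (h1.const_mul (4 * c * g₁))).add
      (((h1.sub_const c).pow 2).mul (h2.pow 2))
    rw [hfun]
    convert h3 using 1
    · rfl
    · rfl
    · funext z; simp only [Pi.add_apply, Pi.sub_apply, Pi.mul_apply, Pi.pow_apply]
    simp only [Pi.pow_apply]
    rw [heq1, heq2]
    push_cast
    ring
  have hd : Differentiable ℝ fun z => H (φ z) (y z) := fun ζ => (key ζ).differentiableAt
  exact is_const_of_deriv_eq_zero hd (fun ζ => (key ζ).deriv)
end

section
/- Let c be a real number with √3 < c < 3, and for φ in the open interval (φ₋, c/3) with φ₋ = (c - √(6c² - 18))/3, define G(φ) = π/2 + arctan(α(φ)) + (2c/√(6c² - 18)) ln(β(φ)), where α(φ) = (3φ - c)/√(-9φ² + 6cφ + 5c² - 18) and β(φ) = (√(6c² - 18) + √(-9φ² + 6cφ + 5c² - 18))/(c - 3φ). Then G is differentiable on (φ₋, c/3) and G'(φ) = (φ - c) / ((φ - c/3)√(-φ² + (2c/3)φ + 5c²/9 - 2)) for every φ in (φ₋, c/3). -/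
/-- For `√3 < c < 3`, the function
`G(φ) = π/2 + arctan(α(φ)) + (2c/√(6c² - 18)) ln(β(φ))`, where
`α(φ) = (3φ - c)/√(-9φ² + 6cφ + 5c² - 18)` and
`β(φ) = (√(6c² - 18) + √(-9φ² + 6cφ + 5c² - 18))/(c - 3φ)`, is differentiable
on `(φ₋, c/3)` with
`G'(φ) = (φ - c)/((φ - c/3)√(-φ² + (2c/3)φ + 5c²/9 - 2))`. -/
theorem stmt_17 (c : ℝ) (hc1 : Real.sqrt 3 < c) (hc2 : c < 3)
    (φm : ℝ) (hφm : φm = (c - Real.sqrt (6 * c ^ 2 - 18)) / 3)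
    (α β G : ℝ → ℝ)
    (hα : ∀ φ : ℝ, α φ =
      (3 * φ - c) / Real.sqrt (-9 * φ ^ 2 + 6 * c * φ + 5 * c ^ 2 - 18))
    (hβ : ∀ φ : ℝ, β φ =
      (Real.sqrt (6 * c ^ 2 - 18) + Real.sqrt (-9 * φ ^ 2 + 6 * c * φ + 5 * c ^ 2 - 18))
        / (c - 3 * φ))
    (hG : ∀ φ : ℝ, G φ = Real.pi / 2 + Real.arctan (α φ)
      + (2 * c / Real.sqrt (6 * c ^ 2 - 18)) * Real.log (β φ)) :
    ∀ φ ∈ Set.Ioo φm (c / 3),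
      HasDerivAt G
        ((φ - c) / ((φ - c / 3) *
          Real.sqrt (-φ ^ 2 + (2 * c / 3) * φ + 5 * c ^ 2 / 9 - 2))) φ := by
  have hGfun : G = fun φ => Real.pi / 2 + Real.arctan (α φ)
      + (2 * c / Real.sqrt (6 * c ^ 2 - 18)) * Real.log (β φ) := funext hG
  have hαfun : α = fun φ =>
      (3 * φ - c) / Real.sqrt (-9 * φ ^ 2 + 6 * c * φ + 5 * c ^ 2 - 18) := funext hα
  have hβfun : β = fun φ =>
      (Real.sqrt (6 * c ^ 2 - 18) + Real.sqrt (-9 * φ ^ 2 + 6 * c * φ + 5 * c ^ 2 - 18))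
        / (c - 3 * φ) := funext hβ
  subst hGfun hαfun hβfun hφm
  rintro φ ⟨h1, h2⟩
  have hc0 : 0 < c := lt_of_le_of_lt (Real.sqrt_nonneg 3) hc1
  have hc3 : 3 < c ^ 2 := by
    nlinarith [Real.sq_sqrt (by norm_num : (3:ℝ) ≥ 0), Real.sqrt_nonneg 3]
  have hD : (0:ℝ) < 6 * c ^ 2 - 18 := by linarith
  set d := Real.sqrt (6 * c ^ 2 - 18) with hdd
  have hd : 0 < d := Real.sqrt_pos.mpr hD
  have hd2 : d ^ 2 = 6 * c ^ 2 - 18 := Real.sq_sqrt hD.le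
  have hu : 0 < c - 3 * φ := by linarith
  have hQ : (0:ℝ) < -9 * φ ^ 2 + 6 * c * φ + 5 * c ^ 2 - 18 := by
    nlinarith [hd2, hu, h1]
  set s := Real.sqrt (-9 * φ ^ 2 + 6 * c * φ + 5 * c ^ 2 - 18) with hss
  have hs : 0 < s := Real.sqrt_pos.mpr hQ
  have hs2 : s ^ 2 = -9 * φ ^ 2 + 6 * c * φ + 5 * c ^ 2 - 18 := Real.sq_sqrt hQ.le
  -- derivative of the quadratic
  have hQd : HasDerivAt (fun x : ℝ => -9 * x ^ 2 + 6 * c * x + 5 * c ^ 2 - 18)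
      (6 * c - 18 * φ) φ := by
    have h : HasDerivAt (fun x : ℝ => -9 * x ^ 2 + 6 * c * x + 5 * c ^ 2 - 18)
        ((-9) * (↑2 * φ ^ (2 - 1)) + 6 * c * 1) φ := by
      exact ((((hasDerivAt_pow 2 φ).const_mul (-9)).add
        ((hasDerivAt_id' φ).const_mul (6 * c))).add_const (5 * c ^ 2)).sub_const 18
    convert h using 1
    push_cast; ring
  have hsd : HasDerivAt (fun x : ℝ =>
      Real.sqrt (-9 * x ^ 2 + 6 * c * x + 5 * c ^ 2 - 18))
      ((6 * c - 18 * φ) / (2 * s)) φ := hQd.sqrt (ne_of_gt hQ)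
  -- derivative of α
  have hnum : HasDerivAt (fun x : ℝ => 3 * x - c) 3 φ := by
    simpa using ((hasDerivAt_id' φ).const_mul 3).sub_const c
  have hαd : HasDerivAt (fun x : ℝ =>
      (3 * x - c) / Real.sqrt (-9 * x ^ 2 + 6 * c * x + 5 * c ^ 2 - 18))
      ((3 * s - (3 * φ - c) * ((6 * c - 18 * φ) / (2 * s))) / s ^ 2) φ :=
    hnum.div hsd (ne_of_gt hs)
  -- derivative of β
  have hden : HasDerivAt (fun x : ℝ => c - 3 * x) (-3) φ := by
    simpa using ((hasDerivAt_id' φ).const_mul 3).const_sub c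
  have hβd : HasDerivAt (fun x : ℝ =>
      (d + Real.sqrt (-9 * x ^ 2 + 6 * c * x + 5 * c ^ 2 - 18)) / (c - 3 * x))
      (((6 * c - 18 * φ) / (2 * s) * (c - 3 * φ) - (d + s) * (-3)) / (c - 3 * φ) ^ 2) φ :=
    (hsd.const_add d).div hden (ne_of_gt hu)
  have hβpos : 0 < (d + s) / (c - 3 * φ) := div_pos (by linarith) hu
  have hlogβ : HasDerivAt (fun x : ℝ => Real.log
      ((d + Real.sqrt (-9 * x ^ 2 + 6 * c * x + 5 * c ^ 2 - 18)) / (c - 3 * x)))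
      ((((6 * c - 18 * φ) / (2 * s) * (c - 3 * φ) - (d + s) * (-3)) / (c - 3 * φ) ^ 2)
        / ((d + s) / (c - 3 * φ))) φ :=
    hβd.log (ne_of_gt hβpos)
  have hGd := ((hαd.arctan.const_add (Real.pi / 2)).add (hlogβ.const_mul (2 * c / d)))
  convert hGd using 1
  case e'_4 => exact rfl
  case e'_5 => exact rfl
  case e'_8 => exact rfl
  -- now prove the equality of derivative values
  have hsqrt9 : Real.sqrt (-φ ^ 2 + 2 * c / 3 * φ + 5 * c ^ 2 / 9 - 2) = s / 3 := by
    have h9 : -φ ^ 2 + 2 * c / 3 * φ + 5 * c ^ 2 / 9 - 2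
        = (-9 * φ ^ 2 + 6 * c * φ + 5 * c ^ 2 - 18) / 9 := by ring
    rw [h9, Real.sqrt_div hQ.le, show Real.sqrt 9 = 3 by
      rw [show (9:ℝ) = 3 ^ 2 by norm_num, Real.sqrt_sq (by norm_num)]]
  rw [hsqrt9, ← hss]
  -- simplify arctan part
  have hA : 1 / (1 + ((3 * φ - c) / s) ^ 2) *
      ((3 * s - (3 * φ - c) * ((6 * c - 18 * φ) / (2 * s))) / s ^ 2) = 3 / s := by
    have h1 : 1 + ((3 * φ - c) / s) ^ 2 = d ^ 2 / s ^ 2 := by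
      field_simp
      linear_combination hs2 - hd2
    rw [h1]
    field_simp
    linear_combination 6 * hs2 - 6 * hd2
  have hB : (((6 * c - 18 * φ) / (2 * s) * (c - 3 * φ) - (d + s) * (-3)) / (c - 3 * φ) ^ 2)
      / ((d + s) / (c - 3 * φ)) = 3 * d / (s * (c - 3 * φ)) := by
    have hds : d + s ≠ 0 := by positivity
    have key : (6 * c - 18 * φ) / (2 * s) * (c - 3 * φ) - (d + s) * (-3)
        = 3 * d * (d + s) / s := by
      field_simp
      linear_combination 6 * hs2 - 6 * hd2
    rw [key]
    field_simp
  rw [hA, hB]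
  have hφc : φ - c / 3 ≠ 0 := sub_ne_zero.mpr (ne_of_lt h2)
  have h3 : c - 3 * φ ≠ 0 := ne_of_gt hu
  have hsum : 3 / s + 2 * c / d * (3 * d / (s * (c - 3 * φ)))
      = 9 * (c - φ) / (s * (c - 3 * φ)) := by
    field_simp
    ring
  rw [hsum, div_eq_div_iff (mul_ne_zero hφc (by positivity)) (mul_ne_zero (ne_of_gt hs) h3)]
  ring
end
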